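/- Let p be a prime and A ⊆ Z/pZ a set with |A| ≥ ⌊√(4p-7)⌋ + 1. Then with k = ⌊(⌊√(4p-7)⌋+1)/2⌋, every element of Z/pZ is a sum of some k-element subset of A; i.e., Σ_k(A) = Z/pZ. -/

import Mathlib

open Finset MvPolynomial

open Finset MvPolynomial

variable {R : Type*} [CommRing R] {k : ℕ}

/-- `DegLt f D`: every monomial of `f` has degree `< D` (coefficientwise). -/
def DegLt (f : MvPolynomial (Fin k) R) (D : ℕ) : Prop :=
  ∀ m : Fin k →₀ ℕ, D ≤ ∑ i, m i → f.coeff m = 0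

lemma msum_eq (m : Fin k →₀ ℕ) : (m.sum fun _ e => e) = ∑ i, m i := by
  rw [Finsupp.sum_fintype]; intro; rfl

lemma degLt_of_totalDegree_le {f : MvPolynomial (Fin k) R} {D : ℕ}
    (h : f.totalDegree ≤ D) : DegLt f (D + 1) := by
  intro m hm
  apply coeff_eq_zero_of_totalDegree_lt
  have : ∑ i ∈ m.support, m i = m.sum fun _ e => e := rfl
  rw [this, msum_eq]
  omega

lemma DegLt.mono {f : MvPolynomial (Fin k) R} {D D' : ℕ} (h : DegLt f D) (hD : D ≤ D') :
    DegLt f D' := fun m hm => h m (le_trans hD hm)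

lemma degLt_zero (D : ℕ) : DegLt (0 : MvPolynomial (Fin k) R) D := by
  intro m _; simp

lemma DegLt.add {f g : MvPolynomial (Fin k) R} {D : ℕ} (hf : DegLt f D) (hg : DegLt g D) :
    DegLt (f + g) D := by
  intro m hm; rw [coeff_add, hf m hm, hg m hm, add_zero]

lemma DegLt.mul_right {f g : MvPolynomial (Fin k) R} {D E : ℕ}
    (hf : DegLt f D) (hg : g.totalDegree ≤ E) : DegLt (f * g) (D + E) := by
  intro m hm
  rw [coeff_mul]
  apply Finset.sum_eq_zero
  rintro ⟨a, b⟩ hab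
  rw [Finset.HasAntidiagonal.mem_antidiagonal] at hab
  by_cases hb : g.coeff b = 0
  · rw [hb, mul_zero]
  · have hble : ∑ i, b i ≤ E := by
      have := le_totalDegree (p := g) (MvPolynomial.mem_support_iff.mpr hb)
      rw [msum_eq] at this; omega
    have hsum : ∑ i, a i + ∑ i, b i = ∑ i, m i := by
      rw [← Finset.sum_add_distrib]
      exact Finset.sum_congr rfl fun i _ => by
        rw [← Finsupp.add_apply, hab]
    have : f.coeff a = 0 := hf a (by omega)
    rw [this, zero_mul]

lemma DegLt.mul_left {f g : MvPolynomial (Fin k) R} {D E : ℕ}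
    (hg : DegLt g E) (hf : f.totalDegree ≤ D) : DegLt (f * g) (D + E) := by
  rw [mul_comm, Nat.add_comm]
  exact hg.mul_right hf

lemma totalDegree_linear (L : MvPolynomial (Fin k) R) (r : R) (hL : L.totalDegree ≤ 1) :
    (L - C r).totalDegree ≤ 1 := by
  refine le_trans (totalDegree_sub _ _) ?_
  simp [hL, totalDegree_C]

/-- product of `|B|` linear-ish factors `L - C (ε b)` equals `L ^ |B|` plus lower terms. -/
lemma degLt_prod_linear {α : Type*} [DecidableEq α] (B : Finset α) (ε : α → R)
    (L : MvPolynomial (Fin k) R) (hL : L.totalDegree ≤ 1) :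
    DegLt (∏ b ∈ B, (L - C (ε b)) - L ^ B.card) B.card := by
  classical
  induction B using Finset.induction_on with
  | empty => simpa using degLt_zero 0
  | @insert a B ha ih =>
    rw [Finset.prod_insert ha, Finset.card_insert_of_notMem ha]
    have hfac : (L - C (ε a)).totalDegree ≤ 1 := totalDegree_linear L (ε a) hL
    have heq : (L - C (ε a)) * ∏ b ∈ B, (L - C (ε b)) - L ^ (B.card + 1)
        = (L - C (ε a)) * (∏ b ∈ B, (L - C (ε b)) - L ^ B.card)
          + (-C (ε a)) * L ^ B.card := by ring
    rw [heq]
    refine DegLt.add ?_ ?_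
    · exact (DegLt.mul_left ih (f := L - C (ε a)) hfac).mono (by omega)
    · apply degLt_of_totalDegree_le
      refine le_trans (totalDegree_mul _ _) ?_
      have h1 : (-C (ε a) : MvPolynomial (Fin k) R).totalDegree = 0 := by
        rw [totalDegree_neg, totalDegree_C]
      have h2 : ((L:MvPolynomial (Fin k) R) ^ B.card).totalDegree ≤ B.card := by
        refine le_trans (totalDegree_pow _ _) ?_
        calc B.card * L.totalDegree ≤ B.card * 1 := Nat.mul_le_mul_left _ hL
          _ = B.card := Nat.mul_one _
      omega

lemma degLt_prod_sub_prod {ι : Type*} [DecidableEq ι] (B : Finset ι)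
    (f g : ι → MvPolynomial (Fin k) R) (D : ι → ℕ)
    (h1 : ∀ i ∈ B, DegLt (f i - g i) (D i))
    (h2 : ∀ i ∈ B, (g i).totalDegree ≤ D i)
    (h3 : ∀ i ∈ B, (f i).totalDegree ≤ D i) :
    DegLt (∏ i ∈ B, f i - ∏ i ∈ B, g i) (∑ i ∈ B, D i) := by
  classical
  induction B using Finset.induction_on with
  | empty => simpa using degLt_zero 0
  | @insert a B ha ih =>
    rw [Finset.prod_insert ha, Finset.prod_insert ha, Finset.sum_insert ha]
    have heq : f a * ∏ i ∈ B, f i - g a * ∏ i ∈ B, g i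
        = (f a - g a) * ∏ i ∈ B, f i + g a * (∏ i ∈ B, f i - ∏ i ∈ B, g i) := by ring
    rw [heq]
    refine DegLt.add ?_ ?_
    · have hprodf : (∏ i ∈ B, f i).totalDegree ≤ ∑ i ∈ B, D i :=
        le_trans (totalDegree_finset_prod _ _)
          (Finset.sum_le_sum fun i hi => h3 i (Finset.mem_insert_of_mem hi))
      exact (h1 a (Finset.mem_insert_self a B)).mul_right hprodf
    · have := ih (fun i hi => h1 i (Finset.mem_insert_of_mem hi))
        (fun i hi => h2 i (Finset.mem_insert_of_mem hi))
        (fun i hi => h3 i (Finset.mem_insert_of_mem hi))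
      exact this.mul_left (h2 a (Finset.mem_insert_self a B))

lemma prod_univ_X_pow (s : Fin k →₀ ℕ) :
    (∏ i, (X i : MvPolynomial (Fin k) R) ^ s i) = monomial s 1 := by
  classical
  rw [← prod_X_pow_eq_monomial]
  symm
  apply Finset.prod_subset (Finset.subset_univ _)
  intro i _ hi
  rw [Finsupp.notMem_support_iff] at hi
  rw [hi, pow_zero]

lemma coeff_sum_X_pow (m : Fin k →₀ ℕ) (M : ℕ) :
    coeff m ((∑ i, (X i : MvPolynomial (Fin k) R)) ^ M)
      = if ∑ i, m i = M then (Nat.multinomial Finset.univ (⇑m) : R) else 0 := by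
  classical
  rw [Finset.sum_pow_eq_sum_piAntidiag univ (fun i => (X i : MvPolynomial (Fin k) R)) M,
    coeff_sum]
  have hterm : ∀ g : Fin k → ℕ,
      coeff m ((Nat.multinomial univ g : MvPolynomial (Fin k) R) * ∏ i, X i ^ g i)
        = if g = ⇑m then (Nat.multinomial univ g : R) else 0 := by
    intro g
    have hmono : (∏ i, (X i : MvPolynomial (Fin k) R) ^ g i)
        = monomial (Finsupp.equivFunOnFinite.symm g) 1 := by
      rw [← prod_univ_X_pow (Finsupp.equivFunOnFinite.symm g)]
      rfl
    rw [hmono, ← map_natCast (C : R →+* MvPolynomial (Fin k) R), coeff_C_mul, coeff_monomial]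
    by_cases hg : g = ⇑m
    · rw [if_pos hg, if_pos, mul_one]
      rw [hg]
      exact Finsupp.equivFunOnFinite.symm_apply_apply m ▸ rfl
    · rw [if_neg hg, if_neg, mul_zero]
      intro hc
      apply hg
      have := congrArg (⇑Finsupp.equivFunOnFinite) hc
      have h' : g = Finsupp.equivFunOnFinite m := by simpa using this
      exact h'
  rw [Finset.sum_congr rfl fun g _ => hterm g, Finset.sum_ite_eq' _ (⇑m)]
  by_cases hmem : ⇑m ∈ Finset.piAntidiag (univ : Finset (Fin k)) M
  · rw [if_pos hmem, if_pos]
    rw [Finset.mem_piAntidiag] at hmem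
    exact hmem.1
  · rw [if_neg hmem, if_neg]
    intro hc
    apply hmem
    rw [Finset.mem_piAntidiag]
    exact ⟨hc, fun i _ => Finset.mem_univ i⟩

section CoeffNonzero

variable {p : ℕ} [Fact p.Prime]

lemma natCast_zmod_factorial_ne_zero {m : ℕ} (hm : m < p) :
    ((m.factorial : ZMod p) : ZMod p) ≠ 0 := by
  rw [Ne, ZMod.natCast_eq_zero_iff]
  intro hdvd
  have := ((Fact.out : p.Prime).dvd_factorial).mp hdvd
  omega

lemma factorial_eq_descFactorial_mul {a b : ℕ} (h : b ≤ a) :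
    a.factorial = a.descFactorial b * (a - b).factorial := by
  rw [Nat.descFactorial_eq_factorial_mul_choose]
  rw [← Nat.choose_mul_factorial_mul_factorial h]
  ring

lemma coeff_V_SM_ne_zero (k : ℕ) (c : Fin k → ℕ) (hc : StrictMono c)
    (hc1 : ∀ i, 1 ≤ c i) (hcp : ∀ i, c i ≤ p) {M : ℕ} (hMp : M ≤ p - 1)
    (hM : M + ∑ i : Fin k, (i : ℕ) = ∑ i, (c i - 1)) :
    coeff (Finsupp.equivFunOnFinite.symm fun i => c i - 1)
      ((∏ i : Fin k, ∏ j ∈ Ioi i, (X j - X i : MvPolynomial (Fin k) (ZMod p)))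
        * (∑ i, X i) ^ M) ≠ 0 := by
  classical
  set F := ZMod p
  set lam : Fin k → ℕ := fun i => c i - 1 with hlam
  set lamf : Fin k →₀ ℕ := Finsupp.equivFunOnFinite.symm lam with hlamf
  have hlam_lt : ∀ i, lam i < p := fun i => by
    have := hc1 i; have := hcp i; simp only [hlam]; omega
  -- the descFactorial matrix
  set N : Matrix (Fin k) (Fin k) F :=
    Matrix.of (fun j i : Fin k => ((lam j).descFactorial (i : ℕ) : F)) with hN
  -- step: express V as a determinant
  have hVdet : (∏ i : Fin k, ∏ j ∈ Ioi i, (X j - X i : MvPolynomial (Fin k) (ZMod p)))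
      = (Matrix.vandermonde fun i => (X i : MvPolynomial (Fin k) (ZMod p))).det :=
    (Matrix.det_vandermonde _).symm
  -- monomial form of the permutation products
  have hmono : ∀ σ : Equiv.Perm (Fin k),
      (∏ i : Fin k, (X (σ i) : MvPolynomial (Fin k) (ZMod p)) ^ (i : ℕ))
        = monomial (Finsupp.equivFunOnFinite.symm fun j => ((σ.symm j : Fin k) : ℕ)) 1 := by
    intro σ
    calc (∏ i : Fin k, (X (σ i) : MvPolynomial (Fin k) (ZMod p)) ^ (i : ℕ))
        = ∏ j : Fin k, (X j : MvPolynomial (Fin k) (ZMod p)) ^ ((σ.symm j : Fin k) : ℕ) := by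
          rw [← Equiv.prod_comp σ
            (fun j => (X j : MvPolynomial (Fin k) (ZMod p)) ^ ((σ.symm j : Fin k) : ℕ))]
          refine Finset.prod_congr rfl fun i _ => ?_
          simp
      _ = ∏ j : Fin k, (X j : MvPolynomial (Fin k) (ZMod p))
            ^ ((Finsupp.equivFunOnFinite.symm fun j => ((σ.symm j : Fin k) : ℕ)) j) := by
          refine Finset.prod_congr rfl fun i _ => ?_
          congr 1
      _ = monomial (Finsupp.equivFunOnFinite.symm fun j => ((σ.symm j : Fin k) : ℕ)) 1 :=
          prod_univ_X_pow _
  -- the coefficient as a signed sum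
  have hcoeff : coeff lamf
      ((∏ i : Fin k, ∏ j ∈ Ioi i, (X j - X i : MvPolynomial (Fin k) (ZMod p))) * (∑ i, X i) ^ M)
      = ∑ σ : Equiv.Perm (Fin k), ((Equiv.Perm.sign σ : ℤ) : F) *
          (if (Finsupp.equivFunOnFinite.symm fun j => ((σ.symm j : Fin k) : ℕ)) ≤ lamf
            then coeff (lamf - Finsupp.equivFunOnFinite.symm fun j => ((σ.symm j : Fin k) : ℕ))
              ((∑ i, (X i : MvPolynomial (Fin k) (ZMod p))) ^ M)
            else 0) := by
    rw [hVdet, Matrix.det_apply', Finset.sum_mul, coeff_sum]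
    refine Finset.sum_congr rfl fun σ _ => ?_
    rw [mul_assoc]
    have hcast : ((Equiv.Perm.sign σ : ℤ) : MvPolynomial (Fin k) (ZMod p))
        = C (((Equiv.Perm.sign σ : ℤ) : F)) := by
      rw [map_intCast (C : F →+* MvPolynomial (Fin k) (ZMod p))]
    simp only [Matrix.vandermonde_apply]
    rw [hcast, coeff_C_mul, hmono σ, coeff_monomial_mul']
    congr 1
    split
    · rw [one_mul]
    · rfl
  -- per-permutation factorial identity
  have hKey : ∀ σ : Equiv.Perm (Fin k),
      (∏ j, ((lam j).factorial : F)) *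
        (if (Finsupp.equivFunOnFinite.symm fun j => ((σ.symm j : Fin k) : ℕ)) ≤ lamf
          then coeff (lamf - Finsupp.equivFunOnFinite.symm fun j => ((σ.symm j : Fin k) : ℕ))
            ((∑ i, (X i : MvPolynomial (Fin k) (ZMod p))) ^ M)
          else 0)
      = (M.factorial : F) * ∏ j, ((lam j).descFactorial ((σ.symm j : Fin k) : ℕ) : F) := by
    intro σ
    set ms : Fin k →₀ ℕ := Finsupp.equivFunOnFinite.symm fun j => ((σ.symm j : Fin k) : ℕ)
      with hms
    have hms_apply : ∀ j, ms j = ((σ.symm j : Fin k) : ℕ) := fun j => rfl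
    have hlamf_apply : ∀ j, lamf j = lam j := fun j => rfl
    by_cases h : ms ≤ lamf
    · have hle : ∀ j, ((σ.symm j : Fin k) : ℕ) ≤ lam j := by
        intro j
        have := Finsupp.le_def.mp h j
        rwa [hms_apply, hlamf_apply] at this
      have happly : ∀ j, (lamf - ms) j = lam j - ((σ.symm j : Fin k) : ℕ) := by
        intro j; rw [Finsupp.tsub_apply, hms_apply, hlamf_apply]
      have hisum : ∑ j : Fin k, ((σ.symm j : Fin k) : ℕ) = ∑ i : Fin k, (i : ℕ) :=
        Equiv.sum_comp σ.symm (fun i => (i : ℕ))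
      have hsumg : ∑ j, (lamf - ms) j = M := by
        have h1 : ∑ j, (lamf - ms) j + ∑ j : Fin k, ((σ.symm j : Fin k) : ℕ)
            = ∑ j, lam j := by
          rw [← Finset.sum_add_distrib]
          refine Finset.sum_congr rfl fun j _ => ?_
          rw [happly j]
          exact Nat.sub_add_cancel (hle j)
        rw [hisum] at h1
        have hM2 : M + ∑ i : Fin k, (i : ℕ) = ∑ j, lam j := hM
        omega
      rw [if_pos h, coeff_sum_X_pow, if_pos hsumg]
      have hmult : Nat.multinomial Finset.univ ⇑(lamf - ms)
          = Nat.multinomial Finset.univ (fun j => lam j - ((σ.symm j : Fin k) : ℕ)) :=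
        congrArg _ (funext happly)
      have natid : (∏ j, (lam j).factorial) *
          Nat.multinomial Finset.univ (fun j => lam j - ((σ.symm j : Fin k) : ℕ))
          = M.factorial * ∏ j, (lam j).descFactorial ((σ.symm j : Fin k) : ℕ) := by
        have h1 : ∏ j, (lam j).factorial
            = (∏ j, (lam j).descFactorial ((σ.symm j : Fin k) : ℕ))
              * ∏ j, (lam j - ((σ.symm j : Fin k) : ℕ)).factorial := by
          rw [← Finset.prod_mul_distrib]
          exact Finset.prod_congr rfl fun j _ => factorial_eq_descFactorial_mul (hle j)
        have hsg : ∑ j, (lam j - ((σ.symm j : Fin k) : ℕ)) = M := by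
          rw [← hsumg]
          exact Finset.sum_congr rfl fun j _ => (happly j).symm
        have spec := Nat.multinomial_spec Finset.univ
          (fun j => lam j - ((σ.symm j : Fin k) : ℕ))
        rw [hsg] at spec
        rw [h1, mul_assoc, spec]
        ring
      rw [hmult]
      calc (∏ j, ((lam j).factorial : F)) *
            (Nat.multinomial Finset.univ (fun j => lam j - ((σ.symm j : Fin k) : ℕ)) : F)
          = (((∏ j, (lam j).factorial) *
              Nat.multinomial Finset.univ (fun j => lam j - ((σ.symm j : Fin k) : ℕ)) : ℕ) : F) := by
            simp only [F, Nat.cast_mul, Nat.cast_prod]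
        _ = ((M.factorial * ∏ j, (lam j).descFactorial ((σ.symm j : Fin k) : ℕ) : ℕ) : F) := by
            rw [natid]
        _ = (M.factorial : F) * ∏ j, ((lam j).descFactorial ((σ.symm j : Fin k) : ℕ) : F) := by
            simp only [F, Nat.cast_mul, Nat.cast_prod]
    · rw [if_neg h, mul_zero]
      symm
      rw [Finsupp.le_def] at h
      push_neg at h
      obtain ⟨j, hj⟩ := h
      rw [hms_apply, hlamf_apply] at hj
      have : ((lam j).descFactorial ((σ.symm j : Fin k) : ℕ) : F) = 0 := by
        rw [Nat.descFactorial_eq_zero_iff_lt.mpr hj, Nat.cast_zero]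
      rw [Finset.prod_eq_zero (Finset.mem_univ j) this, mul_zero]
  -- sum over permutations is the determinant of the descFactorial matrix
  have hdetsum : ∑ σ : Equiv.Perm (Fin k), ((Equiv.Perm.sign σ : ℤ) : F) *
        ∏ j, ((lam j).descFactorial ((σ.symm j : Fin k) : ℕ) : F)
      = N.transpose.det := by
    rw [Matrix.det_apply']
    rw [← Equiv.sum_comp (Equiv.inv (Equiv.Perm (Fin k)))
      (fun τ => ((Equiv.Perm.sign τ : ℤ) : F) * ∏ i, N.transpose (τ i) i)]
    refine Finset.sum_congr rfl fun σ _ => ?_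
    simp only [Equiv.inv_apply, Equiv.Perm.sign_inv, Matrix.transpose_apply]
    rfl
  -- the determinant is a Vandermonde determinant
  have hNdet : N.det = ∏ i : Fin k, ∏ j ∈ Ioi i, ((lam j : F) - (lam i : F)) := by
    have h := Matrix.det_eval_matrixOfPolynomials_eq_det_vandermonde
      (fun i : Fin k => ((lam i : ℕ) : F)) (fun i => descPochhammer F (i : ℕ))
      (fun i => descPochhammer_natDegree F (i : ℕ)) (fun i => monic_descPochhammer F (i : ℕ))
    have hNeq : N = Matrix.of (fun i j : Fin k =>
        Polynomial.eval ((lam i : ℕ) : F) (descPochhammer F (j : ℕ))) := by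
      ext i j
      rw [hN]
      simp only [Matrix.of_apply]
      rw [descPochhammer_eval_eq_descFactorial]
    rw [hNeq, ← h, Matrix.det_vandermonde]
  -- assemble
  intro hzero
  have hbig : (∏ j, ((lam j).factorial : F)) *
      coeff lamf ((∏ i : Fin k, ∏ j ∈ Ioi i, (X j - X i : MvPolynomial (Fin k) (ZMod p)))
        * (∑ i, X i) ^ M)
      = (M.factorial : F) * N.transpose.det := by
    rw [hcoeff, Finset.mul_sum, ← hdetsum, Finset.mul_sum]
    refine Finset.sum_congr rfl fun σ _ => ?_
    rw [mul_left_comm, hKey σ, mul_left_comm]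
  rw [hzero, mul_zero] at hbig
  have hdetne : N.transpose.det ≠ 0 := by
    rw [Matrix.det_transpose, hNdet]
    rw [Finset.prod_ne_zero_iff]
    intro i _
    rw [Finset.prod_ne_zero_iff]
    intro j hj
    rw [sub_ne_zero]
    intro hcast
    have hvij : lam j = lam i := by
      have h1 := ZMod.val_cast_of_lt (hlam_lt j)
      have h2 := ZMod.val_cast_of_lt (hlam_lt i)
      rw [← h1, ← h2, hcast]
    have hij : i < j := Finset.mem_Ioi.mp hj
    have := hc hij
    have := hc1 i
    simp only [hlam] at hvij
    omega
  have hMne : (M.factorial : F) ≠ 0 := by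
    apply natCast_zmod_factorial_ne_zero
    have := (Fact.out : p.Prime).two_le
    omega
  exact (mul_ne_zero hMne hdetne) hbig.symm

end CoeffNonzero

open Finset MvPolynomial

variable {p : ℕ} [Fact p.Prime]

lemma sum_pow_zmod (d : ℕ) :
    ∑ x : ZMod p, x ^ d = if d ≠ 0 ∧ (p - 1) ∣ d then -1 else 0 := by
  have hp : p = Fintype.card (ZMod p) := (ZMod.card p).symm
  classical
  by_cases hd : d = 0
  · subst hd
    simp only [pow_zero, sum_const, card_univ, nsmul_one]
    rw [if_neg (by simp)]
    rw [ZMod.card]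
    exact ZMod.natCast_self p
  · have hsplit : ∑ x : ZMod p, x ^ d = ∑ x : (ZMod p)ˣ, (x : ZMod p) ^ d := by
      let φ : (ZMod p)ˣ ↪ ZMod p := ⟨fun x ↦ x, Units.val_injective⟩
      have huniv : univ.map φ = univ \ {0} := by
        ext x
        simp only [mem_map, mem_univ, Function.Embedding.coeFn_mk, true_and, mem_sdiff,
          mem_singleton, φ]
        exact isUnit_iff_ne_zero
      calc
        ∑ x : ZMod p, x ^ d = ∑ x ∈ univ \ {(0 : ZMod p)}, x ^ d := by
          rw [← sum_sdiff ({0} : Finset (ZMod p)).subset_univ, sum_singleton, zero_pow hd,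
            add_zero]
        _ = ∑ x : (ZMod p)ˣ, (x : ZMod p) ^ d := by simp [φ, ← huniv, univ.sum_map φ]
    rw [hsplit, FiniteField.sum_pow_units, ← hp]
    simp [hd]

/-- Part 1: grid sum over all of `(ZMod p)^k` picks out the coefficient of
`∏ Xᵢ^(p-1)` when the total degree is at most `k*(p-1)`. -/
lemma grid_sum_eq_coeff {k : ℕ} (P : MvPolynomial (Fin k) (ZMod p))
    (hP : P.totalDegree ≤ k * (p - 1)) :
    ∑ x : Fin k → ZMod p, eval x P
      = (-1 : ZMod p) ^ k * P.coeff (Finsupp.equivFunOnFinite.symm fun _ => p - 1) := by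
  classical
  set t : Fin k →₀ ℕ := Finsupp.equivFunOnFinite.symm fun _ => p - 1 with ht
  have hsum : ∀ x : Fin k → ZMod p, eval x P = ∑ d ∈ P.support, P.coeff d * ∏ i, x i ^ d i :=
    fun x => eval_eq' x P
  rw [Finset.sum_congr rfl fun x _ => hsum x, Finset.sum_comm]
  have key : ∀ d ∈ P.support,
      (∑ x : Fin k → ZMod p, P.coeff d * ∏ i, x i ^ d i)
        = if d = t then (-1 : ZMod p) ^ k * P.coeff d else 0 := by
    intro d hd
    rw [← Finset.mul_sum]
    have hprod : ∑ x : Fin k → ZMod p, ∏ i, x i ^ d i = ∏ i, ∑ y : ZMod p, y ^ d i := by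
      rw [Finset.prod_univ_sum (fun _ => (univ : Finset (ZMod p))) (fun i y => y ^ d i)]
      rw [Fintype.piFinset_univ]
    rw [hprod]
    by_cases hdt : d = t
    · rw [if_pos hdt]
      subst hdt
      have : ∀ i : Fin k, ∑ y : ZMod p, y ^ t i = -1 := by
        intro i
        have hdi : t i = p - 1 := rfl
        rw [sum_pow_zmod, if_pos]
        refine ⟨?_, hdi ▸ dvd_refl _⟩
        rw [hdi]
        have := (Fact.out : p.Prime).two_le
        omega
      rw [Finset.prod_congr rfl fun i _ => this i, Finset.prod_const, card_univ,
        Fintype.card_fin, mul_comm]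
    · rw [if_neg hdt]
      -- some coordinate fails the divisibility/nonzero condition
      have hdeg : ∑ i, d i ≤ k * (p - 1) := by
        have h1 : (d.sum fun _ e => e) ≤ P.totalDegree := le_totalDegree hd
        have h2 : (d.sum fun _ e => e) = ∑ i, d i := by
          rw [Finsupp.sum_fintype]; intro; rfl
        omega
      have hbad : ∃ i, ¬(d i ≠ 0 ∧ (p - 1) ∣ d i) := by
        by_contra hall
        push_neg at hall
        have hge : ∀ i, p - 1 ≤ d i := by
          intro i
          obtain ⟨hne, hdvd⟩ := hall i
          exact Nat.le_of_dvd (Nat.pos_of_ne_zero hne) hdvd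
        have hne : ∃ j, d j ≠ p - 1 := by
          by_contra hc
          push_neg at hc
          apply hdt
          ext i
          simpa [ht] using hc i
        obtain ⟨j, hj⟩ := hne
        have hpj : p - 1 < d j := lt_of_le_of_ne (hge j) (Ne.symm hj)
        have hp2 : 2 ≤ p := (Fact.out : p.Prime).two_le
        have : ∑ i, d i > k * (p - 1) := by
          calc k * (p - 1) = ∑ _i : Fin k, (p - 1) := by
                rw [Finset.sum_const, card_univ, Fintype.card_fin, smul_eq_mul]
            _ < ∑ i, d i := by
                apply Finset.sum_lt_sum (fun i _ => hge i) ⟨j, Finset.mem_univ j, hpj⟩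
        omega
      obtain ⟨i, hi⟩ := hbad
      have : ∑ y : ZMod p, y ^ d i = 0 := by rw [sum_pow_zmod, if_neg hi]
      rw [Finset.prod_eq_zero (Finset.mem_univ i) this, mul_zero]
  rw [Finset.sum_congr rfl key, Finset.sum_ite_eq' P.support t]
  by_cases hts : t ∈ P.support
  · rw [if_pos hts]
  · rw [if_neg hts]
    have : P.coeff t = 0 := by simpa [MvPolynomial.mem_support_iff] using hts
    rw [this, mul_zero]

section ANR
variable {p : ℕ} [Fact p.Prime]

theorem anr_contradiction (k : ℕ) (A : Fin k → Finset (ZMod p))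
    (hc : StrictMono fun i => (A i).card)
    (hc1 : ∀ i, 1 ≤ (A i).card)
    (E : Finset (ZMod p))
    (hM : E.card + ∑ i : Fin k, (i : ℕ) = ∑ i, ((A i).card - 1))
    (hMp : E.card ≤ p - 1)
    (hsub : ∀ x : Fin k → ZMod p, (∀ i, x i ∈ A i) → Function.Injective x →
      (∑ i, x i) ∈ E) : False := by
  classical
  have hp2 : 2 ≤ p := (Fact.out : p.Prime).two_le
  set c : Fin k → ℕ := fun i => (A i).card with hcdef
  have hcp : ∀ i, c i ≤ p := fun i => by
    have := Finset.card_le_univ (A i)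
    simpa [ZMod.card] using this
  simp only [show ∀ i, (A i).card = c i from fun i => rfl] at hM
  set M : ℕ := E.card with hMdef
  set v : ℕ := ∑ i : Fin k, (i : ℕ) with hvdef
  -- polynomials
  set V : MvPolynomial (Fin k) (ZMod p) := ∏ i : Fin k, ∏ j ∈ Ioi i, (X j - X i) with hVdef
  set S : MvPolynomial (Fin k) (ZMod p) := ∑ i, X i with hSdef
  set Q : MvPolynomial (Fin k) (ZMod p) := ∏ e ∈ E, (S - C e) with hQdef
  set W : MvPolynomial (Fin k) (ZMod p) := ∏ i : Fin k, ∏ t ∈ (A i)ᶜ, (X i - C t) with hWdef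
  set P : MvPolynomial (Fin k) (ZMod p) := V * (Q * W) with hPdef
  -- degree facts
  have hX1 : ∀ (a b : Fin k), ((X a - X b : MvPolynomial (Fin k) (ZMod p))).totalDegree ≤ 1 := by
    intro a b
    refine le_trans (totalDegree_sub _ _) ?_
    simp [totalDegree_X]
  have hXC1 : ∀ (a : Fin k) (r : ZMod p), ((X a - C r : MvPolynomial (Fin k) (ZMod p))).totalDegree ≤ 1 := by
    intro a r
    refine le_trans (totalDegree_sub _ _) ?_
    simp [totalDegree_X, totalDegree_C]
  have hS1 : S.totalDegree ≤ 1 := by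
    refine le_trans (totalDegree_finset_sum _ _) ?_
    refine Finset.sup_le fun i _ => ?_
    simp [totalDegree_X]
  have hIoicard : ∑ i : Fin k, (Ioi i).card = v := by
    have h1 : ∀ i : Fin k, (Ioi i).card = k - 1 - (i : ℕ) := fun i => Fin.card_Ioi i
    rw [Finset.sum_congr rfl fun i _ => h1 i, hvdef]
    rw [Fin.sum_univ_eq_sum_range (fun i => k - 1 - i) k,
      Fin.sum_univ_eq_sum_range (fun i => i) k]
    exact Finset.sum_range_reflect (fun j => j) k
  have hVdeg : V.totalDegree ≤ v := by
    rw [hVdef, ← hIoicard]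
    refine le_trans (totalDegree_finset_prod _ _) ?_
    refine Finset.sum_le_sum fun i _ => ?_
    refine le_trans (totalDegree_finset_prod _ _) ?_
    calc ∑ j ∈ Ioi i, ((X j - X i : MvPolynomial (Fin k) (ZMod p))).totalDegree
        ≤ ∑ _j ∈ Ioi i, 1 := Finset.sum_le_sum fun j _ => hX1 j i
      _ = (Ioi i).card := by rw [Finset.sum_const, smul_eq_mul, mul_one]
  have hdcard : ∀ i, ((A i)ᶜ : Finset (ZMod p)).card = p - c i := by
    intro i
    rw [Finset.card_compl]
    congr 1
    simp [ZMod.card]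
  have hWideg : ∀ i : Fin k, (∏ t ∈ (A i)ᶜ, (X i - C t : MvPolynomial (Fin k) (ZMod p))).totalDegree
      ≤ p - c i := by
    intro i
    refine le_trans (totalDegree_finset_prod _ _) ?_
    calc ∑ t ∈ (A i)ᶜ, ((X i - C t : MvPolynomial (Fin k) (ZMod p))).totalDegree
        ≤ ∑ _t ∈ (A i)ᶜ, 1 := Finset.sum_le_sum fun t _ => hXC1 i t
      _ = ((A i)ᶜ : Finset (ZMod p)).card := by rw [Finset.sum_const, smul_eq_mul, mul_one]
      _ = p - c i := hdcard i
  have hWdeg : W.totalDegree ≤ ∑ i, (p - c i) := by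
    rw [hWdef]
    refine le_trans (totalDegree_finset_prod _ _) ?_
    exact Finset.sum_le_sum fun i _ => hWideg i
  have hQdeg : Q.totalDegree ≤ M := by
    rw [hQdef]
    refine le_trans (totalDegree_finset_prod _ _) ?_
    calc ∑ e ∈ E, ((S - C e : MvPolynomial (Fin k) (ZMod p))).totalDegree
        ≤ ∑ _e ∈ E, 1 := Finset.sum_le_sum fun e _ =>
          le_trans (totalDegree_sub _ _) (by simp [hS1, totalDegree_C])
      _ = M := by rw [Finset.sum_const, smul_eq_mul, mul_one]
  -- the key arithmetic identity on degrees
  have hSc_ge : k ≤ ∑ i, c i := by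
    calc k = ∑ _i : Fin k, 1 := by rw [Finset.sum_const, card_univ, Fintype.card_fin,
          smul_eq_mul, mul_one]
      _ ≤ ∑ i, c i := Finset.sum_le_sum fun i _ => hc1 i
  have hc1' : ∀ i, 1 ≤ c i := fun i => hc1 i
  have hsum1 : ∑ i, (c i - 1) + k = ∑ i, c i := by
    have h0 : ∑ i : Fin k, ((c i - 1) + 1) = ∑ i, c i :=
      Finset.sum_congr rfl fun i _ => by have := hc1' i; omega
    rw [Finset.sum_add_distrib] at h0
    simpa using h0
  have hsum2 : ∑ i, (p - c i) + ∑ i, c i = k * p := by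
    have h0 : ∑ i : Fin k, ((p - c i) + c i) = ∑ _i : Fin k, p :=
      Finset.sum_congr rfl fun i _ => by have := hcp i; omega
    rw [Finset.sum_add_distrib, Finset.sum_const, card_univ, Fintype.card_fin,
      smul_eq_mul] at h0
    rw [← h0]
  have hdegkey : v + (M + ∑ i, (p - c i)) = k * (p - 1) := by
    have hkp : k * (p - 1) + k = k * p := by
      rw [← Nat.mul_succ]
      congr 1
      omega
    omega
  -- target monomial and exponent vectors
  set t : Fin k →₀ ℕ := Finsupp.equivFunOnFinite.symm fun _ => p - 1 with htdef
  set lamf : Fin k →₀ ℕ := Finsupp.equivFunOnFinite.symm fun i => c i - 1 with hlamfdef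
  set df : Fin k →₀ ℕ := Finsupp.equivFunOnFinite.symm fun i => p - c i with hdfdef
  -- total degree of P
  have hPdeg : P.totalDegree ≤ k * (p - 1) := by
    rw [hPdef, ← hdegkey]
    refine le_trans (totalDegree_mul _ _) ?_
    have := le_trans (totalDegree_mul Q W) (add_le_add hQdeg hWdeg)
    omega
  -- evaluation is identically zero
  have heval : ∀ x : Fin k → ZMod p, eval x P = 0 := by
    intro x
    rw [hPdef, map_mul, map_mul]
    by_cases h1 : ∀ i, x i ∈ A i
    · by_cases h2 : Function.Injective x
      · have hq : eval x Q = 0 := by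
          rw [hQdef, map_prod]
          refine Finset.prod_eq_zero (hsub x h1 h2) ?_
          simp [hSdef]
        rw [hq, zero_mul, mul_zero]
      · have hv : eval x V = 0 := by
          rw [hVdef, map_prod]
          have hex : ∃ a b : Fin k, a < b ∧ x a = x b := by
            rw [Function.not_injective_iff] at h2
            obtain ⟨a, b, hx, hab⟩ := h2
            rcases lt_or_gt_of_ne hab with h | h
            · exact ⟨a, b, h, hx⟩
            · exact ⟨b, a, h, hx.symm⟩
          obtain ⟨a, b, hab, hx⟩ := hex
          refine Finset.prod_eq_zero (Finset.mem_univ a) ?_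
          rw [map_prod]
          refine Finset.prod_eq_zero (Finset.mem_Ioi.mpr hab) ?_
          rw [map_sub, eval_X, eval_X, hx, sub_self]
        rw [hv, zero_mul]
    · push_neg at h1
      obtain ⟨i, hi⟩ := h1
      have hw : eval x W = 0 := by
        rw [hWdef, map_prod]
        refine Finset.prod_eq_zero (Finset.mem_univ i) ?_
        rw [map_prod]
        refine Finset.prod_eq_zero (Finset.mem_compl.mpr hi) ?_
        rw [map_sub, eval_X, eval_C, sub_self]
      rw [hw, mul_zero, mul_zero]
  -- coefficient of t in P is zero
  have hsumt : ∑ i : Fin k, t i = k * (p - 1) := by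
    have : ∀ i : Fin k, t i = p - 1 := fun i => rfl
    rw [Finset.sum_congr rfl fun i _ => this i, Finset.sum_const, card_univ,
      Fintype.card_fin, smul_eq_mul]
  have hcoefft : coeff t P = 0 := by
    have hgs := grid_sum_eq_coeff P hPdeg
    rw [Finset.sum_congr rfl fun x _ => heval x, Finset.sum_const, smul_zero] at hgs
    have hunit : ((-1 : ZMod p) ^ k) ≠ 0 := pow_ne_zero _ (neg_ne_zero.mpr one_ne_zero)
    have := mul_eq_zero.mp hgs.symm
    tauto
  -- replace P by its top part in the coefficient
  have hQtop : DegLt (Q - S ^ M) M := by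
    have h0 := degLt_prod_linear E (fun e => e) S hS1
    rw [hQdef]
    exact h0
  have hWitop : ∀ i : Fin k,
      DegLt ((∏ t' ∈ (A i)ᶜ, (X i - C t' : MvPolynomial (Fin k) (ZMod p)))
        - (X i) ^ (p - c i)) (p - c i) := by
    intro i
    have h0 := degLt_prod_linear ((A i)ᶜ) (fun t' => t') (X i : MvPolynomial (Fin k) (ZMod p))
      (le_of_eq (totalDegree_X i))
    rwa [hdcard i] at h0
  have hWtop : DegLt (W - ∏ i, (X i : MvPolynomial (Fin k) (ZMod p)) ^ (p - c i))
      (∑ i, (p - c i)) := by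
    rw [hWdef]
    refine degLt_prod_sub_prod univ _ _ _ (fun i _ => hWitop i) (fun i _ => ?_)
      (fun i _ => hWideg i)
    exact le_trans (totalDegree_pow _ _) (by rw [totalDegree_X, mul_one])
  have hSMdeg : (S ^ M).totalDegree ≤ M := by
    refine le_trans (totalDegree_pow _ _) ?_
    calc M * S.totalDegree ≤ M * 1 := Nat.mul_le_mul_left _ hS1
      _ = M := Nat.mul_one _
  have hdiff : DegLt (P - V * (S ^ M * ∏ i, (X i : MvPolynomial (Fin k) (ZMod p)) ^ (p - c i)))
      (k * (p - 1)) := by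
    have heq : P - V * (S ^ M * ∏ i, (X i : MvPolynomial (Fin k) (ZMod p)) ^ (p - c i))
        = V * ((Q - S ^ M) * W
          + S ^ M * (W - ∏ i, (X i : MvPolynomial (Fin k) (ZMod p)) ^ (p - c i))) := by
      rw [hPdef]; ring
    rw [heq, ← hdegkey]
    refine DegLt.mul_left ?_ hVdeg
    exact DegLt.add (hQtop.mul_right hWdeg) (hWtop.mul_left hSMdeg)
  have hcoeff_eq : coeff t (V * (S ^ M * ∏ i, (X i : MvPolynomial (Fin k) (ZMod p)) ^ (p - c i)))
      = 0 := by
    have h0 := hdiff t (le_of_eq hsumt.symm)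
    rw [coeff_sub, hcoefft, zero_sub, neg_eq_zero] at h0
    exact h0
  -- shift by the monomial X^df
  have hXd : (∏ i, (X i : MvPolynomial (Fin k) (ZMod p)) ^ (p - c i)) = monomial df 1 := by
    rw [← prod_univ_X_pow df]
    rfl
  have hdle : df ≤ t := by
    rw [Finsupp.le_def]
    intro i
    have h1 := hc1' i
    have h2 := hcp i
    show p - c i ≤ p - 1
    omega
  have htminus : t - df = lamf := by
    ext i
    rw [Finsupp.tsub_apply]
    have h1 := hc1' i
    have h2 := hcp i
    show (p - 1) - (p - c i) = c i - 1
    omega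
  have hfinal : coeff lamf (V * S ^ M) = 0 := by
    have h0 := hcoeff_eq
    rw [hXd, ← mul_assoc, coeff_mul_monomial', if_pos hdle, htminus, mul_one] at h0
    exact h0
  have hne := coeff_V_SM_ne_zero (p := p) k c hc hc1' hcp hMp hM
  rw [← hlamfdef, ← hVdef, ← hSdef] at hne
  exact hne hfinal

end ANR

lemma truncsum (w : ℕ) : ∀ (k D : ℕ), D ≤ k * w →
    ∑ j ∈ range k, min w (D - j * w) = D := by
  intro k
  induction k with
  | zero => intro D hD; simp at hD; simp [hD]
  | succ k ih =>
    intro D hD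
    rw [Finset.sum_range_succ']
    have hrw : ∀ j, min w (D - (j + 1) * w) = min w ((D - w) - j * w) := by
      intro j
      congr 1
      have : (j + 1) * w = j * w + w := by ring
      omega
    rw [Finset.sum_congr rfl fun j _ => hrw j]
    have hkw : D - w ≤ k * w := by
      have : (k + 1) * w = k * w + w := by ring
      omega
    rw [ih (D - w) hkw]
    simp only [Nat.zero_mul, Nat.sub_zero]
    rcases le_total D w with h | h
    · rw [min_eq_right h]; omega
    · rw [min_eq_left h]; omega

lemma exists_strictMono_sum (k n T : ℕ) (hkn : k ≤ n)
    (hT1 : ∑ i : Fin k, ((i : ℕ) + 1) ≤ T)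
    (hT2 : T ≤ k * (n - k) + ∑ i : Fin k, ((i : ℕ) + 1)) :
    ∃ c : Fin k → ℕ, StrictMono c ∧ (∀ i : Fin k, (i : ℕ) + 1 ≤ c i) ∧ (∀ i : Fin k, c i ≤ n)
      ∧ ∑ i, c i = T := by
  set w := n - k with hw
  set D := T - ∑ i : Fin k, ((i : ℕ) + 1) with hD
  have hDw : D ≤ k * w := by omega
  set e : Fin k → ℕ := fun i => min w (D - (k - 1 - (i : ℕ)) * w) with he
  have hemono : ∀ i j : Fin k, i ≤ j → e i ≤ e j := by
    intro i j hij
    refine min_le_min (le_refl w) ?_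
    have : (k - 1 - (j : ℕ)) * w ≤ (k - 1 - (i : ℕ)) * w := by
      apply Nat.mul_le_mul_right
      have : (i : ℕ) ≤ (j : ℕ) := hij
      omega
    omega
  have hebound : ∀ i, e i ≤ w := fun i => min_le_left _ _
  have hesum : ∑ i, e i = D := by
    rw [he]
    have h1 : ∑ i : Fin k, min w (D - (k - 1 - (i : ℕ)) * w)
        = ∑ j ∈ range k, min w (D - (k - 1 - j) * w) :=
      Fin.sum_univ_eq_sum_range (fun j => min w (D - (k - 1 - j) * w)) k
    rw [h1, Finset.sum_range_reflect (fun j => min w (D - j * w)) k]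
    exact truncsum w k D hDw
  refine ⟨fun i => (i : ℕ) + 1 + e i, ?_, ?_, ?_, ?_⟩
  · intro i j hij
    have h1 : (i : ℕ) < (j : ℕ) := hij
    have := hemono i j (le_of_lt hij)
    simp only
    omega
  · intro i; simp only; omega
  · intro i
    have h1 := hebound i
    have h2 : (i : ℕ) < k := i.isLt
    simp only
    omega
  · rw [Finset.sum_add_distrib, hesum]
    omega

/-- The set of all sums of `k`-element subsets of `A`. -/
def sigmaK {p : ℕ} (A : Finset (ZMod p)) (k : ℕ) : Finset (ZMod p) :=
  (A.powersetCard k).image (fun S => S.sum id)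

theorem ksubset_sums_cover (p : ℕ) [Fact p.Prime] (A : Finset (ZMod p))
    (hA : Nat.sqrt (4 * p - 7) + 1 ≤ A.card) :
    sigmaK A ((Nat.sqrt (4 * p - 7) + 1) / 2) = Finset.univ := by
  classical
  have hp2 : 2 ≤ p := (Fact.out : p.Prime).two_le
  set s := Nat.sqrt (4 * p - 7) with hs
  set k := (s + 1) / 2 with hk
  set n := A.card with hn
  have hs1 : 1 ≤ s := by
    rw [hs]
    have h1 : 1 ≤ 4 * p - 7 := by omega
    calc 1 = Nat.sqrt 1 := Nat.sqrt_one.symm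
      _ ≤ Nat.sqrt (4 * p - 7) := Nat.sqrt_le_sqrt h1
  have hsq : 4 * p - 7 < (s + 1) * (s + 1) := by
    have := Nat.lt_succ_sqrt' (4 * p - 7)
    rw [pow_two] at this
    exact this
  have hkey : 1 ≤ k ∧ 2 * k ≤ s + 1 ∧ p - 1 ≤ k * ((s + 1) - k) := by
    rcases Nat.even_or_odd (s + 1) with ⟨m, hm⟩ | ⟨m, hm⟩
    · have hX : (s + 1) * (s + 1) = 4 * (m * m) := by rw [hm]; ring
      have hkm : k = m := by omega
      refine ⟨by omega, by omega, ?_⟩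
      rw [hkm]
      rw [show s + 1 - m = m by omega]
      omega
    · have hX : (s + 1) * (s + 1) = 4 * (m * (m + 1)) + 1 := by rw [hm]; ring
      have hkm : k = m := by omega
      refine ⟨by omega, by omega, ?_⟩
      rw [hkm]
      rw [show s + 1 - m = m + 1 by omega]
      omega
  obtain ⟨hk1, hk2u, hpk⟩ := hkey
  have hun : s + 1 ≤ n := hA
  have hkn : 2 * k ≤ n := le_trans hk2u hun
  have hpkn : p - 1 ≤ k * (n - k) :=
    le_trans hpk (Nat.mul_le_mul_left k (by omega))
  -- choose the cardinalities
  obtain ⟨c, hcmono, hclb, hcub, hcsum⟩ :=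
    exists_strictMono_sum k n (p - 1 + ∑ i : Fin k, ((i : ℕ) + 1)) (by omega) (by omega)
      (by omega)
  -- choose the subsets
  have hchoice : ∀ i : Fin k, ∃ B ⊆ A, B.card = c i := fun i =>
    Finset.exists_subset_card_eq (le_trans (hcub i) (le_of_eq hn.symm))
  choose B hBsub hBcard using hchoice
  by_contra hne
  have hcard : (sigmaK A k).card ≤ p - 1 := by
    have h1 : (sigmaK A k).card < Fintype.card (ZMod p) :=
      Finset.card_lt_iff_ne_univ _ |>.mpr hne
    rw [ZMod.card] at h1
    omega
  obtain ⟨E, hEsub, hEcard⟩ := Finset.exists_superset_card_eq hcard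
    (by rw [ZMod.card]; omega)
  have hmono : StrictMono fun i => (B i).card := by
    have hfe : (fun i => (B i).card) = c := funext hBcard
    rw [hfe]; exact hcmono
  have hone : ∀ i, 1 ≤ (B i).card := fun i => by
    rw [hBcard]; have := hclb i; omega
  have hsumc1 : ∑ i, (c i - 1) + k = ∑ i, c i := by
    have h0 : ∑ i : Fin k, ((c i - 1) + 1) = ∑ i, c i :=
      Finset.sum_congr rfl fun i _ => by have := hclb i; omega
    rw [Finset.sum_add_distrib] at h0
    simpa using h0
  have hsplusone : ∑ i : Fin k, ((i : ℕ) + 1) = (∑ i : Fin k, (i : ℕ)) + k := by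
    rw [Finset.sum_add_distrib, Finset.sum_const, card_univ, Fintype.card_fin, smul_eq_mul,
      mul_one]
  have hM : E.card + ∑ i : Fin k, (i : ℕ) = ∑ i, ((B i).card - 1) := by
    simp only [hBcard]
    omega
  have hMp : E.card ≤ p - 1 := le_of_eq hEcard
  have hsubx : ∀ x : Fin k → ZMod p, (∀ i, x i ∈ B i) → Function.Injective x →
      (∑ i, x i) ∈ E := by
    intro x hx hinj
    have himg : (Finset.image x univ) ∈ A.powersetCard k := by
      rw [Finset.mem_powersetCard]
      constructor
      · intro y hy
        obtain ⟨i, _, rfl⟩ := Finset.mem_image.mp hy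
        exact hBsub i (hx i)
      · rw [Finset.card_image_of_injective _ hinj, card_univ, Fintype.card_fin]
    have hsum : (Finset.image x univ).sum id = ∑ i, x i := by
      rw [Finset.sum_image (fun a _ b _ h => hinj h)]
      rfl
    refine hEsub ?_
    exact Finset.mem_image.mpr ⟨Finset.image x univ, himg, hsum⟩
  exact anr_contradiction k B hmono hone E hM hMp hsubx
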